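/- (Lemma on moduli of a multivariate CDF) Let X be a random vector in ℝ^m whose distribution has a continuous density with compact support, let q(x) = P(X ⪯ x) (coordinatewise order), and assume q is strictly increasing on its compact domain D in the sense that q(x) > q(y) whenever y ⪯ x, y ≠ x, x,y ∈ D. Then there exist monotonically increasing functions F_(−), F_(+) : (0,∞) → ℝ with F_(−)(ε) > 0 and F_(+)(ε) > 0 for every ε > 0 and lim_{ε→0} F_(−)(ε) = lim_{ε→0} F_(+)(ε) = 0, such that for all x, y ∈ D with y ⪯ x: F_(−)(‖x − y‖₂) ≤ q(x) − q(y) ≤ F_(+)(‖x − y‖₂). -/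

import Mathlib

open MeasureTheory ProbabilityTheory

lemma coord_abs_le_norm {m : ℕ} (w : EuclideanSpace ℝ (Fin m)) (i : Fin m) : |w i| ≤ ‖w‖ := by
  rw [EuclideanSpace.norm_eq, ← Real.sqrt_sq_eq_abs]
  apply Real.sqrt_le_sqrt
  have := Finset.single_le_sum (f := fun j => ‖w j‖ ^ 2) (fun j _ => by positivity) (Finset.mem_univ i)
  simpa [Real.norm_eq_abs, sq_abs] using this

lemma qlip {Ω : Type*} [MeasureSpace Ω] [IsProbabilityMeasure (ℙ : Measure Ω)]
    (m : ℕ) (X : Ω → EuclideanSpace ℝ (Fin m)) (hX : Measurable X)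
    (f : EuclideanSpace ℝ (Fin m) → ℝ)
    (hf_cont : Continuous f) (hf_supp : HasCompactSupport f)
    (hdens : Measure.map X ℙ = volume.withDensity fun x => ENNReal.ofReal (f x))
    (q : EuclideanSpace ℝ (Fin m) → ℝ)
    (hq : ∀ x, q x = (ℙ {ω | ∀ i, X ω i ≤ x i}).toReal) :
    ∃ C : ℝ, 0 ≤ C ∧ ∀ x y, (∀ i, y i ≤ x i) → q x - q y ≤ C * ‖x - y‖ := by
  classical
  -- bound on f
  obtain ⟨M₀, hM₀⟩ := (hf_cont.bddAbove_range_of_hasCompactSupport hf_supp)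
  set M : ℝ := max M₀ 0 with hMdef
  have hM : ∀ z, f z ≤ M := fun z => le_trans (hM₀ (Set.mem_range_self z)) (le_max_left _ _)
  have hM0 : 0 ≤ M := le_max_right _ _
  -- bound on support
  obtain ⟨R₀, hR₀⟩ := hf_supp.isBounded.subset_closedBall 0
  set R : ℝ := max R₀ 0 with hRdef
  have hR0 : 0 ≤ R := le_max_right _ _
  set box : Set (EuclideanSpace ℝ (Fin m)) := {z | ∀ j, z j ∈ Set.Icc (-R) R} with hbox
  have hsupp_box : tsupport f ⊆ box := by
    intro z hz j
    have h1 : ‖z‖ ≤ R := le_trans (by simpa using hR₀ hz) (le_max_left _ _)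
    have h2 := (coord_abs_le_norm z j).trans h1
    exact abs_le.mp h2
  -- the measure
  set μ : Measure (EuclideanSpace ℝ (Fin m)) := Measure.map X ℙ with hμ
  haveI : IsProbabilityMeasure μ := Measure.isProbabilityMeasure_map hX.aemeasurable
  set A : EuclideanSpace ℝ (Fin m) → Set (EuclideanSpace ℝ (Fin m)) :=
    fun x => {z | ∀ i, z i ≤ x i} with hA
  have hAmeas : ∀ x, MeasurableSet (A x) := by
    intro x
    have : A x = ⋂ i, (fun z : EuclideanSpace ℝ (Fin m) => z i) ⁻¹' Set.Iic (x i) := by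
      ext z; simp [hA]
    rw [this]
    exact MeasurableSet.iInter fun i =>
      ((EuclideanSpace.proj i).continuous.measurable) measurableSet_Iic
  have hqA : ∀ x, q x = (μ (A x)).toReal := by
    intro x
    rw [hq, hμ, Measure.map_apply hX (hAmeas x)]
    rfl
  set C : ℝ := M * (2 * R + 1) ^ m * m with hC
  refine ⟨C, by positivity, ?_⟩
  intro x y hyx
  -- slabs
  set slab : Fin m → Set (EuclideanSpace ℝ (Fin m)) :=
    fun i => {z | y i < z i ∧ z i ≤ x i} with hslab
  have hslabmeas : ∀ i, MeasurableSet (slab i) := by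
    intro i
    have : slab i = (fun z : EuclideanSpace ℝ (Fin m) => z i) ⁻¹' Set.Ioc (y i) (x i) := rfl
    rw [this]
    exact ((EuclideanSpace.proj i).continuous.measurable) measurableSet_Ioc
  have hdiff : A x \ A y ⊆ ⋃ i, slab i := by
    intro z hz
    obtain ⟨hzx, hzy⟩ := hz
    simp only [hA, Set.mem_setOf_eq, not_forall, not_le] at hzy
    obtain ⟨i, hi⟩ := hzy
    exact Set.mem_iUnion.mpr ⟨i, hi, hzx i⟩
  -- key slab estimate
  have hboxmeas : MeasurableSet box := by
    have : box = ⋂ j, (fun z : EuclideanSpace ℝ (Fin m) => z j) ⁻¹' Set.Icc (-R) R := by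
      ext z; simp [hbox]
    rw [this]
    exact MeasurableSet.iInter fun j =>
      ((EuclideanSpace.proj j).continuous.measurable) measurableSet_Icc
  have hslabvol : ∀ i, μ (slab i) ≤ ENNReal.ofReal (M * (2 * R + 1) ^ m * (x i - y i)) := by
    intro i
    set b : ENNReal := ENNReal.ofReal (2 * R + 1) with hb
    have hb1 : 1 ≤ b := ENNReal.one_le_ofReal.mpr (by linarith)
    set t : Fin m → Set ℝ := fun j => if j = i then Set.Ioc (y i) (x i) else Set.Icc (-R) R with ht
    set P : Set (EuclideanSpace ℝ (Fin m)) := WithLp.ofLp ⁻¹' Set.univ.pi t with hP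
    have hPsub : box ∩ slab i ⊆ P := by
      rintro z ⟨hzb, hzs⟩ j _
      by_cases hj : j = i
      · subst hj; simp only [ht, if_pos rfl]; exact ⟨hzs.1, hzs.2⟩
      · simp only [ht, if_neg hj]; exact hzb j
    have hPmeas : MeasurableSet (Set.univ.pi t) :=
      MeasurableSet.univ_pi fun j => by
        by_cases hj : j = i
        · simp [ht, hj]
        · simp [ht, hj]
    have hPvol : volume P = ∏ j, volume (t j) := by
      have hpre : P = (MeasurableEquiv.toLp 2 (Fin m → ℝ)).symm ⁻¹' (Set.univ.pi t) := rfl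
      rw [hpre, (EuclideanSpace.volume_preserving_symm_measurableEquiv_toLp (Fin m)).measure_preimage
        hPmeas.nullMeasurableSet, volume_pi_pi]
    have hPvol_le : volume P ≤ ENNReal.ofReal (x i - y i) * b ^ m := by
      rw [hPvol, ← Finset.mul_prod_erase Finset.univ _ (Finset.mem_univ i)]
      have h1 : volume (t i) = ENNReal.ofReal (x i - y i) := by
        simp [ht, Real.volume_Ioc]
      rw [h1]
      apply mul_le_mul_right 
      have h2 : ∏ j ∈ Finset.univ.erase i, volume (t j) ≤ ∏ _j ∈ Finset.univ.erase i, b := by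
        apply Finset.prod_le_prod' 
        intro j hj
        have hji : j ≠ i := Finset.ne_of_mem_erase hj
        simp only [ht, if_neg hji, Real.volume_Icc]
        exact ENNReal.ofReal_le_ofReal (by linarith)
      refine h2.trans ?_
      rw [Finset.prod_const]
      exact pow_le_pow_right' hb1 (by simpa using Finset.card_le_univ (Finset.univ.erase i))
    have step1 : μ (slab i) = ∫⁻ z in slab i, ENNReal.ofReal (f z) := by
      rw [hdens, withDensity_apply _ (hslabmeas i)]
    have step2 : (∫⁻ z in slab i, ENNReal.ofReal (f z)) ≤
        ∫⁻ z in slab i, box.indicator (fun _ => ENNReal.ofReal M) z := by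
      apply lintegral_mono
      intro z
      by_cases hz : z ∈ box
      · rw [Set.indicator_of_mem hz]
        exact ENNReal.ofReal_le_ofReal (hM z)
      · rw [Set.indicator_of_notMem hz]
        have : f z = 0 := image_eq_zero_of_notMem_tsupport (fun h => hz (hsupp_box h))
        simp [this]
    have step3 : (∫⁻ z in slab i, box.indicator (fun _ => ENNReal.ofReal M) z)
        = ENNReal.ofReal M * volume (box ∩ slab i) := by
      rw [lintegral_indicator hboxmeas, Measure.restrict_restrict hboxmeas,
        setLIntegral_const]
    calc μ (slab i) ≤ ENNReal.ofReal M * volume (box ∩ slab i) := by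
          rw [step1, ← step3]; exact step2
    _ ≤ ENNReal.ofReal M * volume P := mul_le_mul_right (measure_mono hPsub) _
    _ ≤ ENNReal.ofReal M * (ENNReal.ofReal (x i - y i) * b ^ m) := mul_le_mul_right hPvol_le _
    _ = ENNReal.ofReal (M * (2 * R + 1) ^ m * (x i - y i)) := by
        rw [hb, ← ENNReal.ofReal_pow (by linarith),
          ← ENNReal.ofReal_mul (sub_nonneg.mpr (hyx i)), ← ENNReal.ofReal_mul hM0]
        congr 1
        ring
  -- assemble
  have h1 : μ (A x) ≤ μ (A y) + μ (A x \ A y) := by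
    calc μ (A x) ≤ μ (A y ∪ A x \ A y) := measure_mono (by intro z hz; by_cases h : z ∈ A y <;> [left; right] <;> simp [h, hz]
      )
    _ ≤ μ (A y) + μ (A x \ A y) := measure_union_le _ _
  have h2 : μ (A x \ A y) ≤ ENNReal.ofReal (∑ i, M * (2 * R + 1) ^ m * (x i - y i)) := by
    calc μ (A x \ A y) ≤ μ (⋃ i, slab i) := measure_mono hdiff
    _ ≤ ∑' i, μ (slab i) := measure_iUnion_le _
    _ = ∑ i, μ (slab i) := tsum_fintype _
    _ ≤ ∑ i, ENNReal.ofReal (M * (2 * R + 1) ^ m * (x i - y i)) := Finset.sum_le_sum fun i _ => hslabvol i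
    _ = ENNReal.ofReal (∑ i, M * (2 * R + 1) ^ m * (x i - y i)) := by
        rw [ENNReal.ofReal_sum_of_nonneg]
        intro i _
        have := hyx i
        exact mul_nonneg (by positivity) (by linarith)
  have h3 : q x - q y ≤ (μ (A x \ A y)).toReal := by
    rw [hqA, hqA]
    have hfin : μ (A y) ≠ ⊤ := measure_ne_top _ _
    have hfin2 : μ (A x \ A y) ≠ ⊤ := measure_ne_top _ _
    have := ENNReal.toReal_mono (by finiteness) h1
    rw [ENNReal.toReal_add hfin hfin2] at this
    linarith
  have h4 : (μ (A x \ A y)).toReal ≤ ∑ i, M * (2 * R + 1) ^ m * (x i - y i) :=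
    ENNReal.toReal_le_of_le_ofReal (Finset.sum_nonneg fun i _ => by have := hyx i; exact mul_nonneg (by positivity) (by linarith)) h2
  have h5 : ∑ i, M * (2 * R + 1) ^ m * (x i - y i) ≤ C * ‖x - y‖ := by
    have hterm : ∀ i : Fin m, M * (2 * R + 1) ^ m * (x i - y i) ≤ M * (2 * R + 1) ^ m * ‖x - y‖ := by
      intro i
      apply mul_le_mul_of_nonneg_left _ (by positivity)
      have := coord_abs_le_norm (x - y) i
      have h2 : (x - y) i = x i - y i := rfl
      rw [h2] at this
      exact (le_abs_self _).trans this
    calc ∑ i, M * (2 * R + 1) ^ m * (x i - y i) ≤ ∑ _i : Fin m, M * (2 * R + 1) ^ m * ‖x - y‖ :=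
          Finset.sum_le_sum fun i _ => hterm i
    _ = C * ‖x - y‖ := by simp [hC]; ring
  linarith

/-- **Lemma (moduli of a multivariate CDF).**  Let `X` be a random vector in `ℝ^m` whose
distribution has a continuous density `f` with compact support, let
`q(x) = P(X ⪯ x)` (coordinatewise order), and assume `q` is strictly increasing on the compact
domain `D` (the support of the density), in the sense that `q(y) < q(x)` whenever
`x, y ∈ D`, `y ⪯ x` and `y ≠ x`.  Then there exist monotonically increasing functions
`F₋, F₊ : (0, ∞) → ℝ`, positive on `(0, ∞)` and tending to `0` at `0⁺`, such that for all
`x, y ∈ D` with `y ⪯ x`: `F₋(‖x − y‖₂) ≤ q(x) − q(y) ≤ F₊(‖x − y‖₂)`. -/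
theorem multivariate_cdf_moduli
    {Ω : Type*} [MeasureSpace Ω] [IsProbabilityMeasure (ℙ : Measure Ω)]
    (m : ℕ) (X : Ω → EuclideanSpace ℝ (Fin m)) (hX : Measurable X)
    (f : EuclideanSpace ℝ (Fin m) → ℝ)
    (hf_cont : Continuous f) (hf_supp : HasCompactSupport f) (hf_nonneg : ∀ x, 0 ≤ f x)
    (hdens : Measure.map X ℙ = volume.withDensity fun x => ENNReal.ofReal (f x))
    (D : Set (EuclideanSpace ℝ (Fin m))) (hD : D = tsupport f)
    (q : EuclideanSpace ℝ (Fin m) → ℝ)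
    (hq : ∀ x, q x = (ℙ {ω | ∀ i, X ω i ≤ x i}).toReal)
    (hq_mono : ∀ x ∈ D, ∀ y ∈ D, (∀ i, y i ≤ x i) → y ≠ x → q y < q x) :
    ∃ Fm Fp : ℝ → ℝ,
      MonotoneOn Fm (Set.Ioi (0 : ℝ)) ∧ MonotoneOn Fp (Set.Ioi (0 : ℝ)) ∧
      (∀ ε : ℝ, 0 < ε → 0 < Fm ε) ∧ (∀ ε : ℝ, 0 < ε → 0 < Fp ε) ∧
      Filter.Tendsto Fm (nhdsWithin 0 (Set.Ioi 0)) (nhds 0) ∧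
      Filter.Tendsto Fp (nhdsWithin 0 (Set.Ioi 0)) (nhds 0) ∧
      ∀ x ∈ D, ∀ y ∈ D, (∀ i, y i ≤ x i) →
        Fm (‖x - y‖) ≤ q x - q y ∧ q x - q y ≤ Fp (‖x - y‖) := by
  classical
  let E := EuclideanSpace ℝ (Fin m)
  obtain ⟨C, hC0, hClip⟩ := qlip m X hX f hf_cont hf_supp hdens q hq
  -- global monotonicity of q
  have hmono : ∀ x y : E, (∀ i, y i ≤ x i) → q y ≤ q x := by
    intro x y hyx
    rw [hq, hq]
    apply ENNReal.toReal_mono (measure_ne_top _ _)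
    apply measure_mono
    intro ω hω i
    exact le_trans (hω i) (hyx i)
  -- continuity of q
  have habs : ∀ x y : E, |q x - q y| ≤ C * ‖x - y‖ := by
    intro x y
    set s : E := WithLp.toLp 2 (fun i => max (x i) (y i) : Fin m → ℝ) with hs
    set t : E := WithLp.toLp 2 (fun i => min (x i) (y i) : Fin m → ℝ) with hts
    have hnorm : ‖s - t‖ = ‖x - y‖ := by
      rw [EuclideanSpace.norm_eq, EuclideanSpace.norm_eq]
      congr 1
      apply Finset.sum_congr rfl
      intro j _
      have h1 : (s - t) j = |x j - y j| := by
        have : (s - t) j = max (x j) (y j) - min (x j) (y j) := rfl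
        rw [this, max_sub_min_eq_abs, abs_sub_comm]
      have h2 : (x - y) j = x j - y j := rfl
      rw [h1, h2, Real.norm_eq_abs, Real.norm_eq_abs, abs_abs]
    have hts_le : ∀ i, t i ≤ s i := fun i => le_trans (min_le_left _ _) (le_max_left _ _)
    have hst : q s - q t ≤ C * ‖x - y‖ := by
      have := hClip s t hts_le
      rwa [hnorm] at this
    have hxs : q x ≤ q s := hmono s x fun i => le_max_left _ _
    have hys : q y ≤ q s := hmono s y fun i => le_max_right _ _
    have htx : q t ≤ q x := hmono x t fun i => min_le_left _ _
    have hty : q t ≤ q y := hmono y t fun i => min_le_right _ _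
    rw [abs_le]
    constructor <;> linarith
  have hqcont : Continuous q := by
    rw [Metric.continuous_iff]
    intro x ε hε
    refine ⟨ε / (C + 1), by positivity, fun a ha => ?_⟩
    have h1 : |q a - q x| ≤ C * ‖a - x‖ := habs a x
    have h2 : ‖a - x‖ = dist a x := (dist_eq_norm a x).symm
    have h3 : dist (q a) (q x) = |q a - q x| := Real.dist_eq _ _
    rw [h3]
    calc |q a - q x| ≤ C * dist a x := by rw [← h2]; exact h1
    _ ≤ C * (ε / (C + 1)) := by
        exact mul_le_mul_of_nonneg_left ha.le hC0
    _ < ε := by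
        rw [div_eq_inv_mul, ← mul_assoc]
        have : C * (C + 1)⁻¹ < 1 := by
          rw [mul_inv_lt_iff₀ (by linarith)]
          linarith
        nlinarith
  have hDcomp : IsCompact D := by rw [hD]; exact hf_supp
  -- the sets
  set g : E × E → ℝ := fun p => q p.1 - q p.2 with hg
  have hgcont : Continuous g := (hqcont.comp continuous_fst).sub (hqcont.comp continuous_snd)
  set K : ℝ → Set (E × E) := fun ε =>
    {p | p.1 ∈ D ∧ p.2 ∈ D ∧ (∀ i, p.2 i ≤ p.1 i) ∧ ε ≤ ‖p.1 - p.2‖} with hK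
  set S : ℝ → Set ℝ := fun ε => g '' K ε with hS
  have hS_nonneg : ∀ ε r, r ∈ S ε → 0 ≤ r := by
    rintro ε r ⟨p, hp, rfl⟩
    exact sub_nonneg.mpr (hmono p.1 p.2 hp.2.2.1)
  have hSbdd : ∀ ε, BddBelow (S ε ∪ {ε}) := by
    intro ε
    refine ⟨min 0 ε, ?_⟩
    rintro r (hr | hr)
    · exact le_trans (min_le_left _ _) (hS_nonneg ε r hr)
    · rw [Set.mem_singleton_iff] at hr; subst hr; exact min_le_right _ _
  set Fm : ℝ → ℝ := fun ε => sInf (S ε ∪ {ε}) with hFm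
  set Fp : ℝ → ℝ := fun ε => (C + 1) * ε with hFp
  have hFm_le_eps : ∀ ε, Fm ε ≤ ε := fun ε => csInf_le (hSbdd ε) (Or.inr rfl)
  have hFm_nonneg : ∀ ε, 0 ≤ ε → 0 ≤ Fm ε := by
    intro ε hε
    apply le_csInf ⟨ε, Or.inr rfl⟩
    rintro r (hr | hr)
    · exact hS_nonneg ε r hr
    · rw [Set.mem_singleton_iff] at hr; subst hr; exact hε
  have hKcomp : ∀ ε, IsCompact (K ε) := by
    intro ε
    have heq : K ε = (D ×ˢ D) ∩
        ({p : E × E | ∀ i, p.2 i ≤ p.1 i} ∩ {p : E × E | ε ≤ ‖p.1 - p.2‖}) := by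
      ext p
      simp only [hK, Set.mem_setOf_eq, Set.mem_inter_iff, Set.mem_prod]
      tauto
    rw [heq]
    apply (hDcomp.prod hDcomp).inter_right
    apply IsClosed.inter
    · have : {p : E × E | ∀ i, p.2 i ≤ p.1 i} = ⋂ i, {p : E × E | p.2 i ≤ p.1 i} := by
        ext p; simp
      rw [this]
      exact isClosed_iInter fun i => isClosed_le
        ((EuclideanSpace.proj i).continuous.comp continuous_snd)
        ((EuclideanSpace.proj i).continuous.comp continuous_fst)
    · exact isClosed_le continuous_const ((continuous_fst.sub continuous_snd).norm)
  refine ⟨Fm, Fp, ?_, ?_, ?_, ?_, ?_, ?_, ?_⟩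
  · -- MonotoneOn Fm
    intro a ha b hb hab
    apply le_csInf ⟨b, Or.inr rfl⟩
    rintro r (hr | hr)
    · obtain ⟨p, hp, rfl⟩ := hr
      exact csInf_le (hSbdd a) (Or.inl ⟨p, ⟨hp.1, hp.2.1, hp.2.2.1, le_trans hab hp.2.2.2⟩, rfl⟩)
    · rw [Set.mem_singleton_iff] at hr; subst hr
      exact le_trans (hFm_le_eps a) hab
  · -- MonotoneOn Fp
    intro a _ b _ hab
    exact mul_le_mul_of_nonneg_left hab (by linarith)
  · -- Fm positive
    intro ε hε
    by_cases hne : (S ε).Nonempty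
    · have hScomp : IsCompact (S ε) := (hKcomp ε).image hgcont
      have hmem := hScomp.sInf_mem hne
      obtain ⟨p, hp, heq⟩ := hmem
      obtain ⟨hp1, hp2, hp3, hp4⟩ := hp
      have hpos : 0 < g p := by
        apply sub_pos.mpr
        apply hq_mono p.1 hp1 p.2 hp2 hp3
        intro hpp
        have h0 : ‖p.1 - p.2‖ = 0 := by rw [show p.2 = p.1 from hpp]; simp
        rw [h0] at hp4
        exact absurd hp4 (not_le.mpr hε)
      have hposS : 0 < sInf (S ε) := heq ▸ hpos
      have hge : min (sInf (S ε)) ε ≤ Fm ε := by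
        apply le_csInf ⟨ε, Or.inr rfl⟩
        rintro r (hr | hr)
        · exact le_trans (min_le_left _ _) (csInf_le ⟨0, fun s hs => hS_nonneg ε s hs⟩ hr)
        · rw [Set.mem_singleton_iff] at hr; subst hr; exact min_le_right _ _
      exact lt_of_lt_of_le (lt_min hposS hε) hge
    · have : S ε ∪ {ε} = {ε} := by
        rw [Set.not_nonempty_iff_eq_empty] at hne
        rw [hne, Set.empty_union]
      rw [hFm]
      simp only [this, csInf_singleton]
      exact hε
  · -- Fp positive
    intro ε hε
    have : (0:ℝ) < C + 1 := by linarith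
    positivity
  · -- Tendsto Fm
    apply squeeze_zero' (Filter.eventually_of_mem self_mem_nhdsWithin ?_)
      (Filter.Eventually.of_forall hFm_le_eps) ?_
    · intro ε hε
      exact hFm_nonneg ε (le_of_lt hε)
    · exact Filter.tendsto_id.mono_left nhdsWithin_le_nhds
  · -- Tendsto Fp
    have : Filter.Tendsto Fp (nhds 0) (nhds 0) := by
      have := (continuous_const.mul continuous_id :
        Continuous fun ε : ℝ => (C + 1) * ε).tendsto 0
      have h : Filter.Tendsto (fun ε : ℝ => (C + 1) * ε) (nhds 0) (nhds ((C + 1) * 0)) := this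
      rw [mul_zero] at h
      exact h
    exact this.mono_left nhdsWithin_le_nhds
  · -- the bounds
    intro x hx y hy hyx
    constructor
    · exact csInf_le (hSbdd _) (Or.inl ⟨(x, y), ⟨hx, hy, hyx, le_rfl⟩, rfl⟩)
    · calc q x - q y ≤ C * ‖x - y‖ := hClip x y hyx
      _ ≤ (C + 1) * ‖x - y‖ := by
          apply mul_le_mul_of_nonneg_right (by linarith) (norm_nonneg _)
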